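/- Let r > 0 and γ* = (2r+1)√((r+2)r(2r+1))/(r+2)², δ* = 3(1+r)√(3(r+2)r)/(r+2)². Then the gradient of D with respect to (γ, δ) vanishes at (γ*, δ*): ∂D/∂γ(γ*,δ*) = 0 and ∂D/∂δ(γ*,δ*) = 0. -/

import Mathlib

noncomputable def D (r γ δ : ℝ) : ℝ :=
  δ^6*r^2 - 2*δ^4*(γ^2*(2 + 2*r - r^2) + (2*r^3 + 2*r^4 - r^2))
  - δ^2*(γ^4*(8 + 8*r - r^2) + (8*r^4 + 8*r^3 - r^2)
      - 2*γ^2*(10*r + 19*r^2 + 10*r^3))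
  - 4*(1 + r)*(r + γ^2)^3

lemma deriv_poly6 (c6 c4 c2 c0 x : ℝ) :
    deriv (fun t : ℝ => c6*t^6 + (c4*t^4 + (c2*t^2 + c0))) x
      = 6*c6*x^5 + 4*c4*x^3 + 2*c2*x := by
  have H : HasDerivAt (fun t : ℝ => c6*t^6 + (c4*t^4 + (c2*t^2 + c0)))
      (c6*((6:ℕ)*x^(6-1)) + (c4*((4:ℕ)*x^(4-1)) + (c2*((2:ℕ)*x^(2-1)) + 0))) x :=
    (((hasDerivAt_pow 6 x).const_mul c6).add
      (((hasDerivAt_pow 4 x).const_mul c4).add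
        (((hasDerivAt_pow 2 x).const_mul c2).add (hasDerivAt_const x c0))))
  rw [H.deriv]; push_cast; ring

theorem cusp_gradient_vanishes (r : ℝ) (hr : 0 < r)
    (γs δs : ℝ)
    (hγ : γs = (2*r + 1) * Real.sqrt ((r + 2)*r*(2*r + 1)) / (r + 2)^2)
    (hδ : δs = 3*(1 + r) * Real.sqrt (3*(r + 2)*r) / (r + 2)^2) :
    deriv (fun γ => D r γ δs) γs = 0 ∧ deriv (fun δ => D r γs δ) δs = 0 := by
  have h2 : (r + 2) ≠ 0 := by positivity
  have ha : γs^2 = r*(2*r+1)^3/(r+2)^3 := by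
    rw [hγ, div_pow, mul_pow, Real.sq_sqrt (by positivity)]
    field_simp
  have hb : δs^2 = 27*r*(1+r)^2/(r+2)^3 := by
    rw [hδ, div_pow, mul_pow, Real.sq_sqrt (by positivity)]
    field_simp; ring
  constructor
  · have hfun : (fun γ => D r γ δs) =
        fun γ : ℝ => (-4*(1+r))*γ^6
          + ((-(δs^2*(8+8*r-r^2)) - 12*(1+r)*r)*γ^4
          + ((-2*(δs^2)^2*(2+2*r-r^2) + 2*δs^2*(10*r+19*r^2+10*r^3) - 12*(1+r)*r^2)*γ^2
          + ((δs^2)^3*r^2 - 2*(δs^2)^2*(2*r^3+2*r^4-r^2)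
              - δs^2*(8*r^4+8*r^3-r^2) - 4*(1+r)*r^3))) := by
      funext γ; unfold D; ring
    rw [hfun, deriv_poly6]
    have hz : 6*(-4*(1+r))*(γs^2)^2
        + 4*(-(δs^2*(8+8*r-r^2)) - 12*(1+r)*r)*(γs^2)
        + 2*(-2*(δs^2)^2*(2+2*r-r^2) + 2*δs^2*(10*r+19*r^2+10*r^3) - 12*(1+r)*r^2) = 0 := by
      rw [ha, hb]; field_simp; ring
    have e : 6*(-4*(1+r))*γs^5
        + 4*(-(δs^2*(8+8*r-r^2)) - 12*(1+r)*r)*γs^3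
        + 2*(-2*(δs^2)^2*(2+2*r-r^2) + 2*δs^2*(10*r+19*r^2+10*r^3) - 12*(1+r)*r^2)*γs
        = γs * (6*(-4*(1+r))*(γs^2)^2
          + 4*(-(δs^2*(8+8*r-r^2)) - 12*(1+r)*r)*(γs^2)
          + 2*(-2*(δs^2)^2*(2+2*r-r^2) + 2*δs^2*(10*r+19*r^2+10*r^3) - 12*(1+r)*r^2)) := by
      ring
    rw [e, hz, mul_zero]
  · have hfun : (fun δ => D r γs δ) =
        fun δ : ℝ => (r^2)*δ^6
          + ((-2*(γs^2*(2+2*r-r^2) + 2*r^3+2*r^4-r^2))*δ^4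
          + ((-((γs^2)^2*(8+8*r-r^2) + 8*r^4+8*r^3-r^2 - 2*γs^2*(10*r+19*r^2+10*r^3)))*δ^2
          + (-4*(1+r)*(r+γs^2)^3))) := by
      funext δ; unfold D; ring
    rw [hfun, deriv_poly6]
    have hz : 6*(r^2)*(δs^2)^2
        + 4*(-2*(γs^2*(2+2*r-r^2) + 2*r^3+2*r^4-r^2))*(δs^2)
        + 2*(-((γs^2)^2*(8+8*r-r^2) + 8*r^4+8*r^3-r^2 - 2*γs^2*(10*r+19*r^2+10*r^3))) = 0 := by
      rw [ha, hb]; field_simp; ring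
    have e : 6*(r^2)*δs^5
        + 4*(-2*(γs^2*(2+2*r-r^2) + 2*r^3+2*r^4-r^2))*δs^3
        + 2*(-((γs^2)^2*(8+8*r-r^2) + 8*r^4+8*r^3-r^2 - 2*γs^2*(10*r+19*r^2+10*r^3)))*δs
        = δs * (6*(r^2)*(δs^2)^2
          + 4*(-2*(γs^2*(2+2*r-r^2) + 2*r^3+2*r^4-r^2))*(δs^2)
          + 2*(-((γs^2)^2*(8+8*r-r^2) + 8*r^4+8*r^3-r^2 - 2*γs^2*(10*r+19*r^2+10*r^3)))) := by
      ring
    rw [e, hz, mul_zero]
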